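/- Lemma 8.8 (vanishing identity A): let Γ^2_{2,2} = −mε/u^2, Γ^t_{1,1} (t ≥ 1) be any functions not depending on u^3,...,u^n, and define recursively Γ^n_{2,2} = Γ^{n-2}_{1,1} − Γ^2_{2,2}·u^n/u^2 − (1/u^2)·Σ_{l=1}^{n-3} (Γ^{l+2}_{2,2} − Γ^l_{1,1})·u^{n-l} for n ≥ 3. Then for every l ≥ 3 the quantity A^l := Γ^2_{2,2}·((u^3/u^2)·u^l − u^{l+1}) − Σ_{s=2}^{l-1} (Γ^{s+2}_{2,2} − Γ^s_{1,1})·u^{l-s+1} vanishes identically. -/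
import Mathlib


/-- **Lemma 8.8, vanishing identity `A`.** With
`Γ^2_{2,2} = −mε/u²` (here `D 2`), arbitrary quantities `Γ^t_{1,1}` (here `F t`, which
do not involve the variables `u³,…`), and `D n` defined for `n ≥ 3` by the recursion
`D n = F (n−2) − D 2 · uⁿ/u² − (1/u²) Σ_{l=1}^{n−3} (D (l+2) − F l) u^{n−l}`,
the quantity `A^l = D 2 ((u³/u²) u^l − u^{l+1}) − Σ_{s=2}^{l−1}(D (s+2) − F s) u^{l−s+1}`
vanishes for every `l ≥ 3`. -/
theorem statement9 (mα ε : ℝ) (u : ℕ → ℝ) (hu : u 2 ≠ 0)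
    (D F : ℕ → ℝ)
    (hD2 : D 2 = -(mα * ε) / u 2)
    (hrec : ∀ n : ℕ, 3 ≤ n →
      D n = F (n - 2) - D 2 * u n / u 2
        - (1 / u 2) * ∑ l ∈ Finset.Icc 1 (n - 3), (D (l + 2) - F l) * u (n - l)) :
    ∀ l : ℕ, 3 ≤ l →
      D 2 * ((u 3 / u 2) * u l - u (l + 1))
        - (∑ s ∈ Finset.Icc 2 (l - 1), (D (s + 2) - F s) * u (l - s + 1)) = 0 := by
  intro l hl
  -- recursion at n = 3 : the inner sum is empty
  have h3 : D 3 = F 1 - D 2 * u 3 / u 2 := by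
    have h := hrec 3 (le_refl 3)
    norm_num at h
    exact h
  -- recursion at n = l + 1
  have hL := hrec (l + 1) (by omega)
  rw [show l + 1 - 2 = l - 1 by omega, show l + 1 - 3 = l - 2 by omega] at hL
  set S : ℝ := ∑ s ∈ Finset.Icc 1 (l - 1), (D (s + 2) - F s) * u (l + 1 - s) with hS
  -- split off the top term (s = l - 1) of S
  have hsplit : S = (∑ j ∈ Finset.Icc 1 (l - 2), (D (j + 2) - F j) * u (l + 1 - j))
      + (D (l + 1) - F (l - 1)) * u 2 := by
    rw [hS, show l - 1 = (l - 2) + 1 by omega,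
      Finset.sum_Icc_succ_top (by omega : 1 ≤ l - 2 + 1)]
    rw [show l - 2 + 1 + 2 = l + 1 by omega, show l - 2 + 1 = l - 1 by omega,
      show l + 1 - (l - 1) = 2 by omega]
  -- hence S = -D2 * u(l+1)
  have hSval : S = -(D 2) * u (l + 1) := by
    rw [hsplit]
    field_simp at hL
    linear_combination hL
  -- the goal's sum is S minus its s = 1 term
  have hgoal : (∑ s ∈ Finset.Icc 2 (l - 1), (D (s + 2) - F s) * u (l - s + 1))
      = S - (D 3 - F 1) * u l := by
    have hc : (∑ s ∈ Finset.Icc 2 (l - 1), (D (s + 2) - F s) * u (l - s + 1))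
        = ∑ s ∈ Finset.Icc 2 (l - 1), (D (s + 2) - F s) * u (l + 1 - s) := by
      refine Finset.sum_congr rfl fun s hs => ?_
      simp only [Finset.mem_Icc] at hs
      rw [show l - s + 1 = l + 1 - s by omega]
    rw [hc, hS, show Finset.Icc 1 (l - 1) = insert 1 (Finset.Icc 2 (l - 1)) by
        ext x; simp only [Finset.mem_insert, Finset.mem_Icc]; omega,
      Finset.sum_insert (by simp)]
    norm_num
  rw [hgoal, hSval, h3]
  field_simp
  ring
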